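/- The scalar SigmE function g(ψ) = 2/(1 + exp(-η'ψ/(|ψ| + ε'))) - 1 is differentiable at every ψ ∈ R, including ψ = 0, with derivative at 0 equal to η'/(2ε'). -/

import Mathlib

open Real

lemma sigmE_inner_hasDerivAt_zero (η' ε' : ℝ) (hε : 0 < ε') :
    HasDerivAt (fun ψ : ℝ => -η' * ψ / (|ψ| + ε')) (-η' / ε') 0 := by
  rw [hasDerivAt_iff_tendsto_slope]
  have h1 : ∀ ψ : ℝ, ψ ≠ 0 → slope (fun ψ : ℝ => -η' * ψ / (|ψ| + ε')) 0 ψ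
      = -η' / (|ψ| + ε') := by
    intro ψ hψ
    have hd : |ψ| + ε' ≠ 0 := by positivity
    rw [slope_def_field]
    field_simp [slope_def_field]
    ring
  have h2 : Filter.Tendsto (fun ψ : ℝ => -η' / (|ψ| + ε')) (nhdsWithin 0 {(0:ℝ)}ᶜ)
      (nhds (-η' / ε')) := by
    have hc : ContinuousAt (fun ψ : ℝ => -η' / (|ψ| + ε')) 0 := by
      apply ContinuousAt.div continuousAt_const
      · exact (continuous_abs.continuousAt).add continuousAt_const
      · simpa using hε.ne'
    have := hc.continuousWithinAt (s := {(0:ℝ)}ᶜ)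
    simpa [abs_zero] using this.tendsto
  refine h2.congr' ?_
  filter_upwards [self_mem_nhdsWithin] with ψ hψ
  exact (h1 ψ hψ).symm

lemma sigmE_inner_diff (η' ε' : ℝ) (hε : 0 < ε') (ψ : ℝ) :
    DifferentiableAt ℝ (fun ψ : ℝ => -η' * ψ / (|ψ| + ε')) ψ := by
  rcases eq_or_ne ψ 0 with rfl | hψ
  · exact (sigmE_inner_hasDerivAt_zero η' ε' hε).differentiableAt
  · have habs : DifferentiableAt ℝ (fun x : ℝ => |x|) ψ :=
      (hasDerivAt_abs hψ).differentiableAt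
    have hd : |ψ| + ε' ≠ 0 := by positivity
    exact ((differentiableAt_const _).mul differentiableAt_fun_id).div
      (habs.add (differentiableAt_const _)) hd

theorem sigmE_differentiable (η' ε' : ℝ) (hη : 0 < η') (hε : 0 < ε') :
    let g : ℝ → ℝ := fun ψ => 2 / (1 + Real.exp (-η' * ψ / (|ψ| + ε'))) - 1
    (∀ ψ : ℝ, DifferentiableAt ℝ g ψ) ∧ deriv g 0 = η' / (2 * ε') := by
  intro g
  have hden : ∀ ψ : ℝ, (1 : ℝ) + Real.exp (-η' * ψ / (|ψ| + ε')) ≠ 0 := by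
    intro ψ; positivity
  constructor
  · intro ψ
    exact ((differentiableAt_const _).div
      ((differentiableAt_const _).add (sigmE_inner_diff η' ε' hε ψ).exp)
      (hden ψ)).sub (differentiableAt_const _)
  · have h0 := sigmE_inner_hasDerivAt_zero η' ε' hε
    have hexp := h0.exp
    have hden0 : (1 : ℝ) + Real.exp (-η' * 0 / (|(0:ℝ)| + ε')) ≠ 0 := hden 0
    have hg : HasDerivAt g
        ((0 * (1 + Real.exp (-η' * 0 / (|(0:ℝ)| + ε'))) -
          2 * (0 + Real.exp (-η' * 0 / (|(0:ℝ)| + ε')) * (-η' / ε'))) /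
          (1 + Real.exp (-η' * 0 / (|(0:ℝ)| + ε'))) ^ 2) 0 :=
      ((hasDerivAt_const 0 (2:ℝ)).div ((hasDerivAt_const 0 (1:ℝ)).add hexp) hden0).sub_const 1
    rw [hg.deriv]
    simp only [abs_zero, mul_zero, zero_mul, zero_div, Real.exp_zero]
    field_simp
    ring
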